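/- arXiv:2402.14181 — 2 statements merged into one kernel-verified Lean document; each statement's English description precedes it below -/
import Mathlib

section
/- For any positive integer n and any connected graph G on n vertices, the complete graph K_n is a minor of the Cartesian product G □ S_n, where S_n is the star with n leaves. -/
open SimpleGraph

/-- `G` is a minor of `H`: there is a model of `G` in `H`, i.e. a family of pairwise
disjoint branch sets, each inducing a connected subgraph of `H`, with an edge of `H`
between the branch sets of any two adjacent vertices of `G`. -/
def SimpleGraph.IsMinorOf {α : Type*} {β : Type*} (G : SimpleGraph α) (H : SimpleGraph β) :
    Prop :=
  ∃ B : α → Set β,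
    (∀ x, (H.induce (B x)).Connected) ∧
    (Pairwise fun x y => Disjoint (B x) (B y)) ∧
    (∀ ⦃x y⦄, G.Adj x y → ∃ a ∈ B x, ∃ b ∈ B y, H.Adj a b)

/-- The strong product of two simple graphs. -/
def strongProd {α β : Type*} (G : SimpleGraph α) (H : SimpleGraph β) :
    SimpleGraph (α × β) where
  Adj a b := (a.1 = b.1 ∧ H.Adj a.2 b.2) ∨ (a.2 = b.2 ∧ G.Adj a.1 b.1) ∨
             (G.Adj a.1 b.1 ∧ H.Adj a.2 b.2)
  symm := by
    constructor
    rintro a b (⟨h1, h2⟩ | ⟨h1, h2⟩ | ⟨h1, h2⟩)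
    · exact Or.inl ⟨h1.symm, h2.symm⟩
    · exact Or.inr (Or.inl ⟨h1.symm, h2.symm⟩)
    · exact Or.inr (Or.inr ⟨h1.symm, h2.symm⟩)
  loopless := by
    constructor
    rintro a (⟨_, h⟩ | ⟨_, h⟩ | ⟨h, _⟩)
    · exact H.loopless.irrefl _ h
    · exact G.loopless.irrefl _ h
    · exact G.loopless.irrefl _ h

/-- The lexicographic product of two simple graphs. -/
def lexProd {α β : Type*} (G : SimpleGraph α) (H : SimpleGraph β) :
    SimpleGraph (α × β) where
  Adj a b := G.Adj a.1 b.1 ∨ (a.1 = b.1 ∧ H.Adj a.2 b.2)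
  symm := by
    constructor
    rintro a b (h | ⟨h1, h2⟩)
    · exact Or.inl h.symm
    · exact Or.inr ⟨h1.symm, h2.symm⟩
  loopless := by
    constructor
    rintro a (h | ⟨_, h⟩)
    · exact G.loopless.irrefl _ h
    · exact H.loopless.irrefl _ h

/-- The `k × k` grid graph: vertices `{0,…,k-1}²`, two vertices adjacent iff they differ
by exactly one in exactly one coordinate. -/
def gridGraph (k : ℕ) : SimpleGraph (Fin k × Fin k) :=
  SimpleGraph.fromRel (fun a b =>
    (a.1 = b.1 ∧ a.2.val + 1 = b.2.val) ∨ (a.2 = b.2 ∧ a.1.val + 1 = b.1.val))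

/-- The star with `n` leaves: the root `none` is adjacent to each leaf `some i`. -/
def starGraph (n : ℕ) : SimpleGraph (Option (Fin n)) :=
  SimpleGraph.fromRel (fun a b => a = none ∧ b ≠ none)

/-- The subdivided star `S_{ℓ,p}`: a star with `ℓ` leaves, each edge subdivided `p-1`
times, i.e. a centre `none` with `ℓ` pendant paths `some (i, 0), …, some (i, p-1)`. -/
def subStar (ℓ p : ℕ) : SimpleGraph (Option (Fin ℓ × Fin p)) :=
  SimpleGraph.fromRel (fun a b =>
    (a = none ∧ ∃ (i : Fin ℓ) (j : Fin p), j.val = 0 ∧ b = some (i, j)) ∨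
    (∃ (i : Fin ℓ) (j k : Fin p), a = some (i, j) ∧ b = some (i, k) ∧ j.val + 1 = k.val))

/-- `G` admits a tree-decomposition of width at most `w`: there is a tree `T` (indexed by
`ℕ`) and bags such that every vertex and every edge of `G` lies in some bag, for every
vertex of `G` the set of nodes whose bag contains it induces a non-empty connected
subtree of `T`, and every bag has at most `w + 1` vertices. -/
def HasDecompWidth {V : Type*} (G : SimpleGraph V) (w : ℕ) : Prop :=
  ∃ (T : SimpleGraph ℕ) (bag : ℕ → Finset V),
    T.IsTree ∧
    (∀ v : V, ∃ i, v ∈ bag i) ∧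
    (∀ u v : V, G.Adj u v → ∃ i, u ∈ bag i ∧ v ∈ bag i) ∧
    (∀ v : V, (T.induce {i | v ∈ bag i}).Connected) ∧
    (∀ i, (bag i).card ≤ w + 1)

/-- The treewidth of a finite graph: the minimum width of a tree-decomposition. -/
noncomputable def treewidth {V : Type*} [Fintype V] (G : SimpleGraph V) : ℕ :=
  sInf { w | HasDecompWidth G w }

/-- `gm G`: the maximum `k` such that the `k × k` grid is a minor of `G`. -/
noncomputable def gridMinorNum {V : Type*} (G : SimpleGraph V) : ℕ :=
  sSup { k | (gridGraph k).IsMinorOf G }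

/-- A walk in a tree rooted at `r` is vertical if it contains at most one vertex of
each depth (distance from the root). -/
def IsVertical {V : Type*} (T : SimpleGraph V) (r : V) {u w : V} (p : T.Walk u w) : Prop :=
  ∀ x ∈ p.support, ∀ y ∈ p.support, T.dist r x = T.dist r y → x = y

/-- In the tree `T` rooted at `r`, `v` is an ancestor of `w`: `v` lies on the unique
path from `r` to `w` (in a tree this is equivalent to this distance identity). -/
def Ancestor {V : Type*} (T : SimpleGraph V) (r v w : V) : Prop :=
  T.dist r w = T.dist r v + T.dist v w

/-- Two vertices of a rooted tree are related if one is an ancestor of the other. -/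
def Related {V : Type*} (T : SimpleGraph V) (r v w : V) : Prop :=
  Ancestor T r v w ∨ Ancestor T r w v

/-- The height of `v` in the tree `T` rooted at `r`: the maximum order (number of
vertices) of a vertical path whose upper (minimum-depth) endpoint is `v`. -/
noncomputable def height {V : Type*} (T : SimpleGraph V) (r v : V) : ℕ :=
  sSup { n | ∃ (w : V) (p : T.Walk v w), p.IsPath ∧ IsVertical T r p ∧
      (∀ x ∈ p.support, T.dist r v ≤ T.dist r x) ∧ p.support.length = n }

/-- The radius of a finite graph: the least `e` such that some vertex is within
distance `e` of every vertex. -/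
noncomputable def graphRadius {V : Type*} [Fintype V] (T : SimpleGraph V) : ℕ :=
  sInf { e | ∃ v, ∀ w, T.dist v w ≤ e }

/-- For any positive `n` and any connected graph `G` on `n` vertices, `K_n` is a
minor of `G □ S_n`, where `S_n` is the star with `n` leaves. -/
theorem stmt1 (n : ℕ) (hn : 0 < n) (G : SimpleGraph (Fin n)) (hG : G.Connected) :
    (⊤ : SimpleGraph (Fin n)).IsMinorOf (G.boxProd (_root_.starGraph n)) := by
  classical
  set H := G.boxProd (_root_.starGraph n) with hH
  refine ⟨fun v => {p : Fin n × Option (Fin n) | p = (v, none) ∨ p.2 = some v}, ?_, ?_, ?_⟩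
  · intro v
    set B : Set (Fin n × Option (Fin n)) :=
      {p : Fin n × Option (Fin n) | p = (v, none) ∨ p.2 = some v} with hB
    have hmem : ∀ u : Fin n, ((u, some v) : Fin n × Option (Fin n)) ∈ B := fun u => Or.inr rfl
    have key : ∀ (u u' : Fin n), G.Walk u u' →
        (H.induce B).Reachable ⟨(u, some v), hmem u⟩ ⟨(u', some v), hmem u'⟩ := by
      intro u u' w
      induction w with
      | nil => exact Reachable.refl _
      | @cons a b c h p ih =>
        refine Reachable.trans ?_ ih
        exact Adj.reachable (Or.inl ⟨h, rfl⟩)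
    have hroot : ((v, none) : Fin n × Option (Fin n)) ∈ B := Or.inl rfl
    have hadjroot : (H.induce B).Adj ⟨(v, none), hroot⟩ ⟨(v, some v), hmem v⟩ := by
      refine Or.inr ⟨?_, rfl⟩
      exact ⟨by simp, Or.inl ⟨rfl, by simp⟩⟩
    have hreach : ∀ x : B, (H.induce B).Reachable x ⟨(v, some v), hmem v⟩ := by
      rintro ⟨x, hx | hx⟩
      · subst hx; exact hadjroot.reachable
      · obtain ⟨x1, x2⟩ := x
        cases hx
        exact key x1 v (hG x1 v).some
    haveI : Nonempty B := ⟨⟨(v, some v), hmem v⟩⟩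
    exact ⟨fun x y => (hreach x).trans (hreach y).symm⟩
  · intro v w hvw
    rw [Set.disjoint_left]
    rintro p (hp | hp) (hq | hq)
    · exact hvw (by rw [hp] at hq; exact (Prod.ext_iff.mp hq).1)
    · rw [hp] at hq; simp at hq
    · rw [hq] at hp; simp at hp
    · exact hvw (by rw [hp] at hq; exact Option.some_injective _ hq)
  · intro v w hvw
    refine ⟨(v, none), Or.inl rfl, (v, some w), Or.inr rfl, ?_⟩
    exact Or.inr ⟨⟨by simp, Or.inl ⟨rfl, by simp⟩⟩, rfl⟩
end

section
/- Let G be a bipartite graph with bipartition {A, B}, let S be a star with at least |A| leaves, and let T be any tree with at least |B| vertices. Then G is a minor of the Cartesian product S □ T. -/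
open SimpleGraph

/-- Let `G` be bipartite with bipartition `{A, B}`, let `S` be a star with at least
`|A|` leaves, and let `T` be a tree with at least `|B|` vertices. Then `G` is a minor
of `S □ T`. -/
theorem stmt15 (g m t : ℕ) (G : SimpleGraph (Fin g)) (A B : Set (Fin g))
    (hcover : A ∪ B = Set.univ) (hdisj : Disjoint A B)
    (hbip : ∀ u v, G.Adj u v → (u ∈ A ∧ v ∈ B) ∨ (u ∈ B ∧ v ∈ A))
    (hm : A.ncard ≤ m)
    (T : SimpleGraph (Fin t)) (hT : T.IsTree) (ht : B.ncard ≤ t) :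
    G.IsMinorOf ((_root_.starGraph m).boxProd T) := by
  classical
  -- embeddings of A into Fin m and B into Fin t
  have hA : Fintype.card A ≤ m := by
    rwa [← Nat.card_eq_fintype_card, Nat.card_coe_set_eq]
  have hB : Fintype.card B ≤ t := by
    rwa [← Nat.card_eq_fintype_card, Nat.card_coe_set_eq]
  obtain ⟨fA⟩ : Nonempty (A ↪ Fin m) :=
    Function.Embedding.nonempty_of_card_le (hA.trans_eq (Fintype.card_fin m).symm)
  obtain ⟨fB⟩ : Nonempty (B ↪ Fin t) :=
    Function.Embedding.nonempty_of_card_le (hB.trans_eq (Fintype.card_fin t).symm)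
  have hmemB : ∀ v : Fin g, v ∉ A → v ∈ B := by
    intro v hv
    have : v ∈ A ∪ B := hcover ▸ Set.mem_univ v
    exact this.resolve_left hv
  set H := (_root_.starGraph m).boxProd T with hH
  refine ⟨fun v => if h : v ∈ A then {p | p.1 = some (fA ⟨v, h⟩)}
    else {(none, fB ⟨v, hmemB v h⟩)}, ?_, ?_, ?_⟩
  · intro v
    dsimp only
    by_cases h : v ∈ A
    · rw [dif_pos h]
      set i := fA ⟨v, h⟩
      have e : T ≃g (H.induce {p : Option (Fin m) × Fin t | p.1 = some i}) := by
        refine ⟨⟨fun x => ⟨(some i, x), rfl⟩, fun p => p.1.2, fun x => rfl,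
          fun p => Subtype.ext (Prod.ext p.2.symm rfl)⟩, ?_⟩
        intro x y
        simp only [comap_adj, Function.Embedding.coeFn_mk, Equiv.coe_fn_mk]
        constructor
        · rintro (⟨h1, h2⟩ | ⟨h1, h2⟩)
          · exact absurd h1 ((_root_.starGraph m).loopless.irrefl _)
          · exact h1
        · intro h1
          exact Or.inr ⟨h1, rfl⟩
      exact e.connected_iff.mp hT.isConnected
    · rw [dif_neg h]
      haveI : Nonempty ↥({((none : Option (Fin m)), fB ⟨v, hmemB v h⟩)} : Set _) :=
        ⟨⟨_, rfl⟩⟩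
      refine ⟨fun p q => ?_⟩
      have : p = q := Subtype.ext (p.2.trans q.2.symm)
      exact this ▸ Reachable.refl _
  · intro u v huv
    dsimp only
    by_cases hu : u ∈ A <;> by_cases hv : v ∈ A <;>
      simp only [dif_pos, dif_neg, hu, hv]
    · rw [Set.disjoint_left]
      rintro p hp hq
      have : (some (fA ⟨u, hu⟩) : Option (Fin m)) = some (fA ⟨v, hv⟩) :=
        hp.symm.trans hq
      exact huv (congrArg Subtype.val (fA.injective (Option.some_injective _ this)))
    · rw [Set.disjoint_left]
      rintro p hp rfl
      simp at hp
    · rw [Set.disjoint_left]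
      rintro p rfl hq
      simp at hq
    · rw [Set.disjoint_left]
      rintro p rfl hq
      have : fB ⟨u, hmemB u hu⟩ = fB ⟨v, hmemB v hv⟩ := by
        simpa using congrArg Prod.snd hq
      exact huv (congrArg Subtype.val (fB.injective this))
  · intro u v huv
    have key : ∀ u v, G.Adj u v → u ∈ A → v ∈ B →
        ∃ a ∈ (if h : u ∈ A then {p : Option (Fin m) × Fin t | p.1 = some (fA ⟨u, h⟩)}
          else {(none, fB ⟨u, hmemB u h⟩)}),
        ∃ b ∈ (if h : v ∈ A then {p : Option (Fin m) × Fin t | p.1 = some (fA ⟨v, h⟩)}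
          else {(none, fB ⟨v, hmemB v h⟩)}), H.Adj a b := by
      intro u v huv hu hv
      have hv' : v ∉ A := fun h => hdisj.ne_of_mem h hv rfl
      refine ⟨(some (fA ⟨u, hu⟩), fB ⟨v, hmemB v hv'⟩), by simp [dif_pos hu],
        (none, fB ⟨v, hmemB v hv'⟩), by simp [dif_neg hv'], ?_⟩
      apply SimpleGraph.boxProd_adj.mpr
      left
      refine ⟨?_, rfl⟩
      simp [_root_.starGraph]
    rcases hbip u v huv with ⟨hu, hv⟩ | ⟨hu, hv⟩
    · exact key u v huv hu hv
    · obtain ⟨a, ha, b, hb, hab⟩ := key v u huv.symm hv hu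
      exact ⟨b, hb, a, ha, hab.symm⟩
end
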